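/- Let < be a strict linear order on E whose inverse relation <⁻¹ is a strict well-order. Then the collection of <-terminal intervals of E is strictly well-ordered by set-theoretic inclusion. -/

import Mathlib

/-- If the inverse of a strict linear order `lt` on `E` is a strict
well-order, then the `lt`-terminal intervals are strictly well-ordered by inclusion. -/
theorem terminal_intervals_wellordered {E : Type*} (lt : E → E → Prop)
    (hlin : IsStrictTotalOrder E lt)
    (hinv : IsWellOrder E (fun x y => lt y x)) :
    IsWellOrder {I : Set E // ∀ x y, lt x y → x ∈ I → y ∈ I}
      (fun I J => I.1 ⊂ J.1) := by
  have total : ∀ (I J : {I : Set E // ∀ x y, lt x y → x ∈ I → y ∈ I}),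
      I.1 ⊆ J.1 ∨ J.1 ⊆ I.1 := by
    intro I J
    by_cases h : I.1 ⊆ J.1
    · exact Or.inl h
    · obtain ⟨a, haI, haJ⟩ := Set.not_subset.1 h
      refine Or.inr fun b hb => ?_
      rcases trichotomous_of lt a b with h1 | h1 | h1
      · exact I.2 a b h1 haI
      · exact absurd (h1 ▸ hb) haJ
      · exact absurd (J.2 b a h1 hb) haJ
  refine { trichotomous := ?_, wf := ?_ }
  swap
  · intro I J
    refine (fun (H : I.1 ⊂ J.1 ∨ I = J ∨ J.1 ⊂ I.1) h1 h2 => (H.resolve_left h1).resolve_right h2) ?_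
    rcases total I J with h | h
    · by_cases h2 : J.1 ⊆ I.1
      · exact Or.inr (Or.inl (Subtype.ext (Set.Subset.antisymm h h2)))
      · exact Or.inl ⟨h, h2⟩
    · by_cases h2 : I.1 ⊆ J.1
      · exact Or.inr (Or.inl (Subtype.ext (Set.Subset.antisymm h2 h)))
      · exact Or.inr (Or.inr ⟨h, h2⟩)
  · haveI : IsStrictOrder {I : Set E // ∀ x y, lt x y → x ∈ I → y ∈ I}
        (fun I J => I.1 ⊂ J.1) :=
      { irrefl := fun a h => h.2 h.1, trans := fun a b c h1 h2 => h1.trans h2 }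
    rw [RelEmbedding.wellFounded_iff_isEmpty]
    constructor
    intro f
    have hd : ∀ n : ℕ, (f (n + 1)).1 ⊂ (f n).1 :=
      fun n => f.map_rel_iff.2 (Nat.lt_succ_self n)
    choose x hx1 hx2 using fun n => Set.exists_of_ssubset (hd n)
    have hseq : ∀ n : ℕ, lt (x n) (x (n + 1)) := by
      intro n
      rcases trichotomous_of lt (x n) (x (n + 1)) with h1 | h1 | h1
      · exact h1
      · exact absurd (h1 ▸ hx1 (n + 1)) (hx2 n)
      · exact absurd ((f (n + 1)).2 _ _ h1 (hx1 (n + 1))) (hx2 n)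
    exact (RelEmbedding.wellFounded_iff_isEmpty.1 hinv.wf).false
      (RelEmbedding.natGT x hseq)
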